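/- Let A ∈ ℝ^{n×n}, B ∈ ℝ^{n×m} and suppose (A, B) is controllable, i.e., rank [B, AB, ..., A^{n-1}B] = n. Let X₀ ∈ ℝ^{n×T}, U ∈ ℝ^{m×T} with X₁ = A X₀ + B U and rank [U; X₀] = n + m. Then for every sequence of matrices K(0), ..., K(N-1) ∈ ℝ^{m×n}, there exist G(0), ..., G(N-1) ∈ ℝ^{T×n} with U G(k) = K(k), X₀ G(k) = I_n, and the closed-loop product satisfies (A + B K(N-1)) ⋯ (A + B K(0)) = (X₁ G(N-1)) ⋯ (X₁ G(0)). -/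
import Mathlib

open Matrix

lemma full_row_rank_surjective {p T : ℕ} {ι : Type*} [Fintype ι] [DecidableEq ι]
    (M : Matrix ι (Fin T) ℝ) (h : M.rank = Fintype.card ι) :
    ∀ Y : Matrix ι (Fin p) ℝ, ∃ G : Matrix (Fin T) (Fin p) ℝ, M * G = Y := by
  have hsurj : Function.Surjective M.mulVecLin := by
    rw [← LinearMap.range_eq_top]
    apply Submodule.eq_top_of_finrank_eq
    rw [← Matrix.rank, h]
    simp [Module.finrank_fintype_fun_eq_card]
  intro Y
  choose x hx using fun j : Fin p => hsurj (fun i => Y i j)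
  refine ⟨Matrix.of fun t j => x j t, ?_⟩
  ext i j
  have := congrFun (hx j) i
  simpa [Matrix.mulVecLin_apply, Matrix.mulVec, Matrix.mul_apply, dotProduct] using this

/-- Data-driven representation of time-varying closed-loop trajectories: if
`(A,B)` is controllable and the data matrices satisfy `X₁ = A X₀ + B U` with
`rank [U; X₀] = m + n`, then every sequence of gains `K(k)` admits matrices
`G(k)` with `U G(k) = K(k)`, `X₀ G(k) = I`, and
`(A + B K(N-1)) ⋯ (A + B K(0)) = (X₁ G(N-1)) ⋯ (X₁ G(0))`. -/
theorem data_driven_closed_loop_product (n m T N : ℕ)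
    (A : Matrix (Fin n) (Fin n) ℝ) (B : Matrix (Fin n) (Fin m) ℝ)
    (ctrb : Matrix (Fin n) (Fin n × Fin m) ℝ)
    (hctrb : ∀ (i : Fin n) (j : Fin n) (l : Fin m), ctrb i (j, l) = (A ^ (j : ℕ) * B) i l)
    (hcontrollable : ctrb.rank = n)
    (U : Matrix (Fin m) (Fin T) ℝ) (X₀ X₁ : Matrix (Fin n) (Fin T) ℝ)
    (hdata : X₁ = A * X₀ + B * U)
    (hrank : (Matrix.fromRows U X₀).rank = m + n) :
    ∀ K : ℕ → Matrix (Fin m) (Fin n) ℝ,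
      ∃ G : ℕ → Matrix (Fin T) (Fin n) ℝ,
        (∀ k, k < N → U * G k = K k ∧ X₀ * G k = 1) ∧
        ((List.range N).reverse.map (fun k => A + B * K k)).prod =
          ((List.range N).reverse.map (fun k => X₁ * G k)).prod := by
  intro K
  have hcard : (Matrix.fromRows U X₀).rank = Fintype.card (Fin m ⊕ Fin n) := by
    simpa using hrank
  choose G hG using fun k =>
    full_row_rank_surjective (Matrix.fromRows U X₀) hcard
      (Matrix.fromRows (K k) (1 : Matrix (Fin n) (Fin n) ℝ))
  have hU : ∀ k, U * G k = K k := by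
    intro k
    have := hG k
    rw [Matrix.fromRows_mul] at this
    ext i j; exact congrFun (congrFun this (Sum.inl i)) j
  have hX : ∀ k, X₀ * G k = 1 := by
    intro k
    have := hG k
    rw [Matrix.fromRows_mul] at this
    ext i j; exact congrFun (congrFun this (Sum.inr i)) j
  refine ⟨G, fun k _ => ⟨hU k, hX k⟩, ?_⟩
  congr 1
  apply List.map_congr_left
  intro k _
  rw [hdata, Matrix.add_mul, Matrix.mul_assoc, Matrix.mul_assoc, hU k, hX k, mul_one]
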